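/- Suppose A and B are real symmetric M×M matrices with A positive semidefinite and [A,B] = 0. Let C = B − (1/2)A² with eigenvalues c₁ ≤ ⋯ ≤ c_M counted with multiplicity, and assume c_m < c_{m+1}. Then P⋆ := 1_{(−∞,c_m]}(C) is the unique global minimizer of J over Gr(m,ℝ^M), and the matrices A, B, C, P⋆ pairwise commute. -/
import Mathlib


open Matrix Filter Topology

noncomputable section

/-- Commutator of matrices. -/
def commut {M : ℕ} (X Y : Matrix (Fin M) (Fin M) ℝ) : Matrix (Fin M) (Fin M) ℝ :=
  X * Y - Y * X

/-- The Grassmann manifold `Gr(m, ℝ^M)`. -/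
def Gr (M m : ℕ) (P : Matrix (Fin M) (Fin M) ℝ) : Prop :=
  P.IsSymm ∧ P * P = P ∧ P.trace = (m : ℝ)

/-- The cost function `J(P) = Tr(BP) - (1/2) Tr(APAP)`. -/
def Jfun {M : ℕ} (A B P : Matrix (Fin M) (Fin M) ℝ) : ℝ :=
  (B * P).trace - (1 / 2) * (A * P * A * P).trace

/-- `μ` is the non-decreasing enumeration of the eigenvalues of `S`, with multiplicity. -/
def sortedEigs {M : ℕ} (S : Matrix (Fin M) (Fin M) ℝ) (μ : Fin M → ℝ) : Prop :=
  Monotone μ ∧ ∃ U : Matrix (Fin M) (Fin M) ℝ, U * Uᵀ = 1 ∧ S = U * Matrix.diagonal μ * Uᵀ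

/-- `P = 1_{(-∞,t]}(S)`: the orthogonal projector onto the sum of the eigenspaces of the
symmetric matrix `S` associated with eigenvalues `≤ t`. -/
def IsSpectralProjLE {M : ℕ} (S : Matrix (Fin M) (Fin M) ℝ) (t : ℝ)
    (P : Matrix (Fin M) (Fin M) ℝ) : Prop :=
  P.IsSymm ∧ P * P = P ∧ S * P = P * S ∧
  (∀ v : Fin M → ℝ, P.mulVec v = v → S.mulVec v ⬝ᵥ v ≤ t * (v ⬝ᵥ v)) ∧
  (∀ v : Fin M → ℝ, v ≠ 0 → P.mulVec v = 0 → t * (v ⬝ᵥ v) < S.mulVec v ⬝ᵥ v)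

namespace Stmt10Aux

/-- indicator of the first `m` coordinates -/
def chi (M m : ℕ) : Fin M → ℝ := fun i => if (i : ℕ) < m then 1 else 0

lemma chi_sum {M m : ℕ} (h : m ≤ M) : ∑ i : Fin M, chi M m i = (m : ℝ) := by
  unfold chi
  rw [Fin.sum_univ_eq_sum_range (fun i => if i < m then (1:ℝ) else 0) M]
  have h2 : ∀ x ∈ Finset.range M, (if x < m then (1:ℝ) else 0)
      = if x ∈ Finset.range m then (1:ℝ) else 0 := fun x _ => by simp [Finset.mem_range]
  rw [Finset.sum_congr rfl h2, Finset.sum_ite_mem,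
    Finset.inter_eq_right.mpr (Finset.range_subset_range.mpr h), Finset.sum_const,
    Finset.card_range]
  simp

lemma dot_self_pos {M : ℕ} {v : Fin M → ℝ} (h : v ≠ 0) : 0 < v ⬝ᵥ v := by
  have h0 : 0 ≤ v ⬝ᵥ v := by
    simp only [dotProduct]
    exact Finset.sum_nonneg fun i _ => mul_self_nonneg _
  rcases h0.lt_or_eq with h1 | h1
  · exact h1
  · exact absurd (dotProduct_self_eq_zero.mp h1.symm) h

lemma trace_tmul_nonneg {M : ℕ} (X : Matrix (Fin M) (Fin M) ℝ) : 0 ≤ (Xᵀ * X).trace := by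
  rw [Matrix.trace]
  apply Finset.sum_nonneg
  intro j _
  simp only [Matrix.diag_apply, Matrix.mul_apply, Matrix.transpose_apply]
  exact Finset.sum_nonneg fun i _ => mul_self_nonneg _

lemma proj_diag_sum_sq {M : ℕ} (P : Matrix (Fin M) (Fin M) ℝ) (hs : P.IsSymm)
    (hp : P * P = P) (i : Fin M) : P i i = ∑ j, (P i j)^2 := by
  have h := congrArg (fun Q : Matrix (Fin M) (Fin M) ℝ => Q i i) hp
  simp only [Matrix.mul_apply] at h
  rw [← h]
  apply Finset.sum_congr rfl
  intro j _
  rw [hs.apply j i, sq]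

lemma proj_diag_nonneg {M : ℕ} (P : Matrix (Fin M) (Fin M) ℝ) (hs : P.IsSymm)
    (hp : P * P = P) (i : Fin M) : 0 ≤ P i i := by
  rw [proj_diag_sum_sq P hs hp i]
  exact Finset.sum_nonneg fun j _ => sq_nonneg _

lemma proj_diag_ge_sq {M : ℕ} (P : Matrix (Fin M) (Fin M) ℝ) (hs : P.IsSymm)
    (hp : P * P = P) (i : Fin M) : (P i i)^2 ≤ P i i := by
  conv_rhs => rw [proj_diag_sum_sq P hs hp i]
  exact Finset.single_le_sum (f := fun j => (P i j)^2) (fun j _ => sq_nonneg _) (Finset.mem_univ i)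

lemma proj_diag_le_one {M : ℕ} (P : Matrix (Fin M) (Fin M) ℝ) (hs : P.IsSymm)
    (hp : P * P = P) (i : Fin M) : P i i ≤ 1 := by
  have h1 := proj_diag_ge_sq P hs hp i
  have h0 := proj_diag_nonneg P hs hp i
  nlinarith

lemma proj_offdiag_zero {M : ℕ} (P : Matrix (Fin M) (Fin M) ℝ) (hs : P.IsSymm)
    (hp : P * P = P) (i : Fin M) (hii : (P i i)^2 = P i i) :
    ∀ j, j ≠ i → P i j = 0 := by
  have h := proj_diag_sum_sq P hs hp i
  rw [← Finset.sum_erase_add _ _ (Finset.mem_univ i)] at h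
  have hz : ∑ j ∈ Finset.univ.erase i, (P i j)^2 = 0 := by linarith [hii]
  intro j hj
  have := (Finset.sum_eq_zero_iff_of_nonneg (fun k _ => sq_nonneg (P i k))).mp hz j
    (Finset.mem_erase.mpr ⟨hj, Finset.mem_univ j⟩)
  exact pow_eq_zero_iff (by norm_num) |>.mp this

lemma kyfan {M m : ℕ} (c p : Fin M → ℝ) (t : ℝ)
    (hle : ∀ i : Fin M, (i : ℕ) < m → c i ≤ t)
    (hgt : ∀ i : Fin M, m ≤ (i : ℕ) → t < c i)
    (h0 : ∀ i, 0 ≤ p i) (h1 : ∀ i, p i ≤ 1)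
    (hsum : ∑ i : Fin M, p i = ∑ i : Fin M, chi M m i) :
    (∑ i : Fin M, c i * chi M m i) ≤ ∑ i : Fin M, c i * p i ∧
    (∑ i : Fin M, c i * p i = ∑ i : Fin M, c i * chi M m i →
      ∀ i, p i = chi M m i) := by
  set χ : Fin M → ℝ := chi M m with hχ
  have hχval : ∀ i : Fin M, χ i = if (i : ℕ) < m then 1 else 0 := fun i => rfl
  have key : ∑ i, c i * p i - ∑ i, c i * χ i = ∑ i, (c i - t) * (p i - χ i) := by
    have expand : ∀ i : Fin M, (c i - t) * (p i - χ i)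
        = (c i * p i - c i * χ i) - (t * p i - t * χ i) := by intro i; ring
    rw [Finset.sum_congr rfl (fun i _ => expand i), Finset.sum_sub_distrib,
      Finset.sum_sub_distrib, Finset.sum_sub_distrib, ← Finset.mul_sum, ← Finset.mul_sum, hsum]
    ring
  have tnn : ∀ i ∈ (Finset.univ : Finset (Fin M)), 0 ≤ (c i - t) * (p i - χ i) := by
    intro i _
    by_cases hi : (i : ℕ) < m
    · have hχi : χ i = 1 := by rw [hχval i, if_pos hi]
      rw [hχi]
      have := hle i hi
      have := h1 i
      nlinarith
    · have hχi : χ i = 0 := by rw [hχval i, if_neg hi]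
      rw [hχi]
      have := (hgt i (le_of_not_gt hi)).le
      have := h0 i
      nlinarith
  constructor
  · have := Finset.sum_nonneg tnn
    linarith [key]
  · intro heq
    have hz := (Finset.sum_eq_zero_iff_of_nonneg tnn).mp (by rw [← key]; linarith)
    have pz : ∀ i : Fin M, m ≤ (i : ℕ) → p i = 0 := by
      intro i hi
      have h := hz i (Finset.mem_univ i)
      have hχi : χ i = 0 := by rw [hχval i, if_neg (not_lt.mpr hi)]
      rw [hχi, sub_zero] at h
      rcases mul_eq_zero.mp h with h' | h'
      · exact absurd h' (by have := hgt i hi; intro hc; linarith [sub_eq_zero.mp hc])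
      · exact h'
    have hsplit := Finset.sum_filter_add_sum_filter_not Finset.univ
      (fun i : Fin M => (i : ℕ) < m) p
    have h2 : ∑ i ∈ Finset.univ.filter (fun i : Fin M => ¬ (i : ℕ) < m), p i = 0 :=
      Finset.sum_eq_zero fun i hi => pz i (le_of_not_gt (Finset.mem_filter.mp hi).2)
    have hχs : ∑ i, χ i = ∑ i ∈ Finset.univ.filter (fun i : Fin M => (i : ℕ) < m), (1:ℝ) := by
      rw [Finset.sum_filter]
      exact Finset.sum_congr rfl fun i _ => hχval i
    have h3 : ∑ i ∈ Finset.univ.filter (fun i : Fin M => (i : ℕ) < m), (1 - p i) = 0 := by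
      rw [Finset.sum_sub_distrib]
      have h4 : ∑ i ∈ Finset.univ.filter (fun i : Fin M => (i : ℕ) < m), p i = ∑ i, p i := by
        rw [← hsplit, h2, add_zero]
      rw [h4, hsum, hχs]
      ring
    have h4 := (Finset.sum_eq_zero_iff_of_nonneg
      (fun i _ => by have := h1 i; linarith)).mp h3
    intro i
    by_cases hi : (i : ℕ) < m
    · have := h4 i (Finset.mem_filter.mpr ⟨Finset.mem_univ i, hi⟩)
      rw [hχval i, if_pos hi]
      linarith
    · rw [hχval i, if_neg hi]
      exact pz i (le_of_not_gt hi)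

lemma trace_diagonal_mul {M : ℕ} (c : Fin M → ℝ) (Y : Matrix (Fin M) (Fin M) ℝ) :
    (Matrix.diagonal c * Y).trace = ∑ i, c i * Y i i := by
  rw [Matrix.trace]
  exact Finset.sum_congr rfl fun i _ => by rw [Matrix.diag_apply, Matrix.diagonal_mul]

lemma trace_proj_ineq {M : ℕ} (A P : Matrix (Fin M) (Fin M) ℝ)
    (hA : A.IsSymm) (hPs : P.IsSymm) (hPP : P * P = P) :
    (A * P * A * P).trace ≤ (A * A * P).trace := by
  have hPP' : ∀ X : Matrix (Fin M) (Fin M) ℝ, P * (P * X) = P * X := by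
    intro X; rw [← Matrix.mul_assoc, hPP]
  have hXt : (A * P - P * A * P)ᵀ = P * A - P * A * P := by
    simp [Matrix.transpose_sub, Matrix.transpose_mul, hA.eq, hPs.eq, Matrix.mul_assoc]
  have hprod : (P * A - P * A * P) * (A * P - P * A * P)
      = P * (A * (A * P)) - P * (A * (P * (A * P))) := by
    simp only [Matrix.mul_sub, Matrix.sub_mul, Matrix.mul_assoc, hPP']
    abel
  have htrP : ∀ X : Matrix (Fin M) (Fin M) ℝ, (P * X).trace = (X * P).trace := fun X =>
    Matrix.trace_mul_comm P X
  have key : ((A * P - P * A * P)ᵀ * (A * P - P * A * P)).trace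
      = (A * A * P).trace - (A * P * A * P).trace := by
    rw [hXt, hprod, Matrix.trace_sub, htrP, htrP]
    congr 1
    · rw [show A * (A * P) * P = A * A * (P * P) by simp only [Matrix.mul_assoc], hPP]
    · rw [show A * (P * (A * P)) * P = A * P * A * (P * P) by
        simp only [Matrix.mul_assoc], hPP]
  have := trace_tmul_nonneg (A * P - P * A * P)
  linarith [key]

lemma trace_proj_eq {M : ℕ} (A P : Matrix (Fin M) (Fin M) ℝ)
    (hPP : P * P = P) (h : A * P = P * A) :
    (A * P * A * P).trace = (A * A * P).trace := by
  rw [Matrix.mul_assoc A P A, ← h, ← Matrix.mul_assoc, Matrix.mul_assoc (A*A) P P, hPP]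

end Stmt10Aux

open Stmt10Aux in
/-- if `[A,B] = 0` and the sorted eigenvalues of `C = B − (1/2)A²` satisfy
`c_m < c_{m+1}`, then `P⋆ = 1_{(−∞,c_m]}(C)` is the unique global minimizer of `J` over
`Gr(m,ℝ^M)`, and `A`, `B`, `C`, `P⋆` pairwise commute. -/
theorem stmt_10 {M m : ℕ} (hM : 2 ≤ M) (hm1 : 1 ≤ m) (hm2 : m ≤ M - 1)
    (A B : Matrix (Fin M) (Fin M) ℝ) (hA : A.IsSymm) (hApsd : A.PosSemidef)
    (hB : B.IsSymm) (hAB : commut A B = 0)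
    (c : Fin M → ℝ) (hc : sortedEigs (B - (1 / 2 : ℝ) • (A * A)) c)
    (hgap : c ⟨m - 1, by omega⟩ < c ⟨m, by omega⟩)
    (Pstar : Matrix (Fin M) (Fin M) ℝ)
    (hPstar : IsSpectralProjLE (B - (1 / 2 : ℝ) • (A * A)) (c ⟨m - 1, by omega⟩) Pstar) :
    Gr M m Pstar ∧
      (∀ P : Matrix (Fin M) (Fin M) ℝ, Gr M m P → Jfun A B Pstar ≤ Jfun A B P) ∧
      (∀ P : Matrix (Fin M) (Fin M) ℝ, Gr M m P →
        (∀ Q : Matrix (Fin M) (Fin M) ℝ, Gr M m Q → Jfun A B P ≤ Jfun A B Q) →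
        P = Pstar) ∧
      commut A B = 0 ∧ commut A (B - (1 / 2 : ℝ) • (A * A)) = 0 ∧ commut A Pstar = 0 ∧
      commut B (B - (1 / 2 : ℝ) • (A * A)) = 0 ∧ commut B Pstar = 0 ∧
      commut (B - (1 / 2 : ℝ) • (A * A)) Pstar = 0 := by
  have hmM : m - 1 < M := by omega
  have hmM' : m < M := by omega
  set C : Matrix (Fin M) (Fin M) ℝ := B - (1 / 2 : ℝ) • (A * A) with hCdef
  obtain ⟨hPsymm, hPP0, hPC, hcond4, hcond5⟩ := hPstar
  obtain ⟨hcm, U, hU, hCU⟩ := hc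
  have hUtU : Uᵀ * U = 1 := mul_eq_one_comm.mp hU
  have hUL : ∀ X : Matrix (Fin M) (Fin M) ℝ, U * (Uᵀ * X) = X := by
    intro X; rw [← Matrix.mul_assoc, hU, Matrix.one_mul]
  have hUR : ∀ X : Matrix (Fin M) (Fin M) ℝ, Uᵀ * (U * X) = X := by
    intro X; rw [← Matrix.mul_assoc, hUtU, Matrix.one_mul]
  -- eigenvalue bounds
  have hcle : ∀ i : Fin M, (i : ℕ) < m → c i ≤ c ⟨m - 1, by omega⟩ := by
    intro i hi
    exact hcm (by rw [Fin.le_def]; simp; omega)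
  have hcgt : ∀ i : Fin M, m ≤ (i : ℕ) → c ⟨m - 1, by omega⟩ < c i := by
    intro i hi
    exact lt_of_lt_of_le hgap (hcm (by rw [Fin.le_def]; simpa using hi))
  -- eigenvectors
  have hCU' : C * U = U * Matrix.diagonal c := by
    rw [hCU, Matrix.mul_assoc (U * Matrix.diagonal c) Uᵀ U, hUtU, Matrix.mul_one]
  have hCu : ∀ i : Fin M, C.mulVec (fun k => U k i) = c i • (fun k => U k i) := by
    intro i; funext k
    have h1 : (C * U) k i = (U * Matrix.diagonal c) k i := by rw [hCU']
    rw [Matrix.mul_apply, Matrix.mul_diagonal] at h1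
    simp only [Matrix.mulVec, dotProduct, Pi.smul_apply, smul_eq_mul]
    rw [h1]; ring
  -- identification of Pstar columns
  have hPu : ∀ i : Fin M, Pstar.mulVec (fun k => U k i)
      = chi M m i • (fun k => U k i) := by
    intro i
    set u : Fin M → ℝ := fun k => U k i with hu
    have hCPu : C.mulVec (Pstar.mulVec u) = c i • Pstar.mulVec u := by
      rw [Matrix.mulVec_mulVec, hPC, ← Matrix.mulVec_mulVec, hCu i, Matrix.mulVec_smul]
    by_cases hi : (i : ℕ) < m
    · have hχi : chi M m i = (1:ℝ) := if_pos hi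
      rw [hχi, one_smul]
      set w : Fin M → ℝ := u - Pstar.mulVec u with hw
      have hPw : Pstar.mulVec w = 0 := by
        rw [hw, Matrix.mulVec_sub, Matrix.mulVec_mulVec, hPP0, sub_self]
      have hCw : C.mulVec w = c i • w := by
        rw [hw, Matrix.mulVec_sub, hCu i, hCPu, smul_sub]
      by_cases hw0 : w = 0
      · have := sub_eq_zero.mp hw0
        exact this.symm
      · exfalso
        have h5 := hcond5 w hw0 hPw
        have hdot : C.mulVec w ⬝ᵥ w = c i * (w ⬝ᵥ w) := by
          rw [hCw, smul_dotProduct, smul_eq_mul]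
        have hpos : 0 < w ⬝ᵥ w := dot_self_pos hw0
        have hle' := hcle i hi
        rw [hdot] at h5
        nlinarith
    · have hχi : chi M m i = (0:ℝ) := if_neg hi
      rw [hχi, zero_smul]
      set w : Fin M → ℝ := Pstar.mulVec u with hw
      have hPw : Pstar.mulVec w = w := by
        rw [hw, Matrix.mulVec_mulVec, hPP0]
      by_cases hw0 : w = 0
      · exact hw0
      · exfalso
        have h4 := hcond4 w hPw
        have hdot : C.mulVec w ⬝ᵥ w = c i * (w ⬝ᵥ w) := by
          rw [hw, hCPu, smul_dotProduct, smul_eq_mul]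
        have hpos : 0 < w ⬝ᵥ w := dot_self_pos hw0
        have hgt' := hcgt i (le_of_not_gt hi)
        rw [hdot] at h4
        nlinarith
  have hPU : Pstar * U = U * Matrix.diagonal (chi M m) := by
    ext k i
    have h : Pstar.mulVec (fun k => U k i) k
        = (chi M m i • (fun k => U k i)) k := by rw [hPu i]
    simp only [Matrix.mulVec, dotProduct, Pi.smul_apply, smul_eq_mul] at h
    rw [Matrix.mul_apply, Matrix.mul_diagonal, h]
    ring
  have hPdiag : Pstar = U * Matrix.diagonal (chi M m) * Uᵀ := by
    have h : Pstar * (U * Uᵀ) = U * Matrix.diagonal (chi M m) * Uᵀ := by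
      rw [← Matrix.mul_assoc, hPU]
    rw [hU, Matrix.mul_one] at h
    exact h
  have hχsum : ∑ i : Fin M, chi M m i = (m : ℝ) := chi_sum (by omega)
  have htrPstar : Pstar.trace = (m : ℝ) := by
    rw [hPdiag, Matrix.trace_mul_comm, ← Matrix.mul_assoc, hUtU, Matrix.one_mul,
      Matrix.trace_diagonal, hχsum]
  have hGrstar : Gr M m Pstar := ⟨hPsymm, hPP0, htrPstar⟩
  -- trace formula
  have htraceC : ∀ P : Matrix (Fin M) (Fin M) ℝ,
      (C * P).trace = ∑ i : Fin M, c i * (Uᵀ * P * U) i i := by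
    intro P
    have h1 : C * P = U * (Matrix.diagonal c * (Uᵀ * P)) := by
      rw [hCU]; simp only [Matrix.mul_assoc]
    rw [h1, Matrix.trace_mul_comm, Matrix.mul_assoc, trace_diagonal_mul]
  have hCtr : ∀ P : Matrix (Fin M) (Fin M) ℝ,
      (C * P).trace = (B * P).trace - (1/2) * (A * A * P).trace := by
    intro P
    rw [hCdef, Matrix.sub_mul, Matrix.smul_mul, Matrix.trace_sub, Matrix.trace_smul,
      smul_eq_mul]
  have hJge : ∀ P : Matrix (Fin M) (Fin M) ℝ, P.IsSymm → P * P = P →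
      (C * P).trace ≤ Jfun A B P := by
    intro P hs hpp
    have h2 := trace_proj_ineq A P hA hs hpp
    have h1 := hCtr P
    simp only [Jfun]
    linarith
  -- commutation facts
  have hABeq : A * B = B * A := by
    have h := hAB
    simp only [commut] at h
    exact sub_eq_zero.mp h
  have hACeq : A * C = C * A := by
    rw [hCdef, Matrix.mul_sub, Matrix.sub_mul, Matrix.mul_smul, Matrix.smul_mul, hABeq,
      ← Matrix.mul_assoc]
  have hBA2 : B * (A * A) = (A * A) * B := by
    calc B * (A * A) = (B * A) * A := by rw [Matrix.mul_assoc]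
    _ = (A * B) * A := by rw [hABeq]
    _ = A * (B * A) := by rw [Matrix.mul_assoc]
    _ = A * (A * B) := by rw [hABeq]
    _ = (A * A) * B := by rw [Matrix.mul_assoc]
  have hBCeq : B * C = C * B := by
    rw [hCdef, Matrix.mul_sub, Matrix.sub_mul, Matrix.mul_smul, Matrix.smul_mul, hBA2]
  have hcompat : ∀ i j : Fin M, chi M m i ≠ chi M m j → c i ≠ c j := by
    intro i j hij
    by_cases hi : (i : ℕ) < m <;> by_cases hj : (j : ℕ) < m
    · exact absurd (by simp [chi, hi, hj]) hij
    · exact ne_of_lt (lt_of_le_of_lt (hcle i hi) (hcgt j (le_of_not_gt hj)))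
    · exact (ne_of_lt (lt_of_le_of_lt (hcle j hj) (hcgt i (le_of_not_gt hi)))).symm
    · exact absurd (by simp [chi, hi, hj]) hij
  have htransfer : ∀ X : Matrix (Fin M) (Fin M) ℝ, X * C = C * X →
      X * Pstar = Pstar * X := by
    intro X hXC
    set Y := Uᵀ * X * U with hY
    have hYD : Y * Matrix.diagonal c = Matrix.diagonal c * Y := by
      have e1 : Y * Matrix.diagonal c = Uᵀ * (X * C) * U := by
        rw [hY, hCU]; simp only [Matrix.mul_assoc, hUtU, Matrix.mul_one]
      have e2 : Matrix.diagonal c * Y = Uᵀ * (C * X) * U := by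
        rw [hY, hCU]; simp only [Matrix.mul_assoc, hUR]
      rw [e1, e2, hXC]
    have hYχ : Y * Matrix.diagonal (chi M m) = Matrix.diagonal (chi M m) * Y := by
      ext i j
      rw [Matrix.mul_diagonal, Matrix.diagonal_mul]
      by_cases hij : chi M m i = chi M m j
      · rw [hij]; ring
      · have hc' : c i ≠ c j := hcompat i j hij
        have h : (Y * Matrix.diagonal c) i j = (Matrix.diagonal c * Y) i j := by rw [hYD]
        rw [Matrix.mul_diagonal, Matrix.diagonal_mul] at h
        have h2 : Y i j * (c j - c i) = 0 := by linarith [h]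
        rcases mul_eq_zero.mp h2 with h3 | h3
        · rw [h3]; ring
        · exact absurd (by linarith : c j = c i) (Ne.symm hc')
    have hXeq : X = U * Y * Uᵀ := by
      rw [hY]; simp only [Matrix.mul_assoc, hUL, hU, Matrix.mul_one]
    rw [hPdiag]
    conv_lhs => rw [hXeq]
    conv_rhs => rw [hXeq]
    simp only [Matrix.mul_assoc, hUR]
    rw [← Matrix.mul_assoc Y, hYχ, Matrix.mul_assoc]
  have hAPs : A * Pstar = Pstar * A := htransfer A hACeq
  -- J at Pstar
  have hPdiagU : Uᵀ * Pstar * U = Matrix.diagonal (chi M m) := by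
    rw [hPdiag]
    simp only [Matrix.mul_assoc, hUR, hUtU, Matrix.mul_one]
  have hCPstar : (C * Pstar).trace = ∑ i : Fin M, c i * chi M m i := by
    rw [htraceC Pstar, hPdiagU]
    exact Finset.sum_congr rfl fun i _ => by rw [Matrix.diagonal_apply_eq]
  have hJstar : Jfun A B Pstar = ∑ i : Fin M, c i * chi M m i := by
    have h1 := trace_proj_eq A Pstar hPP0 hAPs
    have h2 := hCtr Pstar
    simp only [Jfun]
    rw [h1]
    linarith [hCPstar]
  -- per-P facts
  have hPfacts : ∀ P : Matrix (Fin M) (Fin M) ℝ, Gr M m P →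
      (∑ i : Fin M, c i * chi M m i) ≤ ∑ i : Fin M, c i * (Uᵀ * P * U) i i ∧
      (∑ i : Fin M, c i * (Uᵀ * P * U) i i = ∑ i : Fin M, c i * chi M m i →
        ∀ i, (Uᵀ * P * U) i i = chi M m i) := by
    intro P hGrP
    obtain ⟨hs, hpp, htr⟩ := hGrP
    have hpp' : ∀ X : Matrix (Fin M) (Fin M) ℝ, P * (P * X) = P * X := by
      intro X; rw [← Matrix.mul_assoc, hpp]
    have hP's : (Uᵀ * P * U).IsSymm := by
      show (Uᵀ * P * U)ᵀ = Uᵀ * P * U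
      simp [Matrix.transpose_mul, hs.eq, Matrix.mul_assoc]
    have hP'pp : (Uᵀ * P * U) * (Uᵀ * P * U) = Uᵀ * P * U := by
      simp only [Matrix.mul_assoc, hUL, hpp']
    have hP'tr : ∑ i : Fin M, (Uᵀ * P * U) i i = (m : ℝ) := by
      have h : (Uᵀ * P * U).trace = P.trace := by
        rw [Matrix.trace_mul_comm, hUL]
      rw [Matrix.trace] at h
      rw [show (∑ i : Fin M, (Uᵀ * P * U) i i) = ∑ i, (Uᵀ * P * U).diag i from rfl, h, htr]
    exact kyfan c (fun i => (Uᵀ * P * U) i i) (c ⟨m - 1, by omega⟩) hcle hcgt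
      (fun i => proj_diag_nonneg _ hP's hP'pp i)
      (fun i => proj_diag_le_one _ hP's hP'pp i)
      (by rw [hP'tr, hχsum])
  refine ⟨hGrstar, ?_, ?_, hAB, sub_eq_zero.mpr hACeq, sub_eq_zero.mpr hAPs,
    sub_eq_zero.mpr hBCeq, sub_eq_zero.mpr (htransfer B hBCeq), sub_eq_zero.mpr hPC⟩
  · intro P hGrP
    have h1 := (hPfacts P hGrP).1
    have h2 := hJge P hGrP.1 hGrP.2.1
    have h3 := htraceC P
    linarith [hJstar]
  · intro P hGrP hminP
    obtain ⟨hs, hpp, htr⟩ := hGrP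
    have hle1 := hminP Pstar hGrstar
    have h1 := (hPfacts P ⟨hs, hpp, htr⟩).1
    have h2 := hJge P hs hpp
    have h3 := htraceC P
    have heq : ∑ i : Fin M, c i * (Uᵀ * P * U) i i = ∑ i : Fin M, c i * chi M m i := by
      linarith [hJstar]
    have hdiagvals := (hPfacts P ⟨hs, hpp, htr⟩).2 heq
    -- conclude P = Pstar
    have hP's : (Uᵀ * P * U).IsSymm := by
      show (Uᵀ * P * U)ᵀ = Uᵀ * P * U
      simp [Matrix.transpose_mul, hs.eq, Matrix.mul_assoc]
    have hpp' : ∀ X : Matrix (Fin M) (Fin M) ℝ, P * (P * X) = P * X := by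
      intro X; rw [← Matrix.mul_assoc, hpp]
    have hP'pp : (Uᵀ * P * U) * (Uᵀ * P * U) = Uᵀ * P * U := by
      simp only [Matrix.mul_assoc, hUL, hpp']
    have hP'diag : Uᵀ * P * U = Matrix.diagonal (chi M m) := by
      ext i j
      by_cases hij : i = j
      · subst hij
        rw [Matrix.diagonal_apply_eq]
        exact hdiagvals i
      · rw [Matrix.diagonal_apply_ne _ hij]
        apply proj_offdiag_zero _ hP's hP'pp i _ j (fun h => hij h.symm)
        rw [hdiagvals i]
        by_cases hi : (i : ℕ) < m <;> simp [chi, hi]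
    have hback : U * (Uᵀ * P * U) * Uᵀ = P := by
      simp only [Matrix.mul_assoc, hUL, hU, Matrix.mul_one]
    rw [← hback, hP'diag, ← hPdiag]
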